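/- Let F be a nonempty closed set of d × d density matrices, let ρ be a d × d density matrix, and let 0 < s < R_F(ρ). Then there exists a family of Hermitian matrices (W̃_m)_{m=2}^{d}, where W̃_m has size d^m × d^m, such that: (i) tr[W̃_m · ρ^{⊗m}] < 0 for every m ∈ {2, …, d}, and (ii) for every σ ∈ F there exists m ∈ {2, …, d} with tr[W̃_m · σ^{⊗m}] ≥ 0. Here η^{⊗m} denotes the m-fold Kronecker power of η. -/

import Mathlib

open scoped ComplexOrder ENNReal

/-- A density matrix: positive semidefinite (hence Hermitian) with trace 1. -/
def IsDensityMatrix {d : ℕ} (A : Matrix (Fin d) (Fin d) ℂ) : Prop :=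
  A.PosSemidef ∧ A.trace = 1

/-- The generalized robustness `R_F(ρ)`, valued in the extended nonnegative reals:
the infimum of `s ≥ 0` such that `(ρ + sτ)/(1 + s) ∈ F` for some density matrix `τ`
(`+∞` if no such `s` exists). -/
noncomputable def Robustness {d : ℕ} (F : Set (Matrix (Fin d) (Fin d) ℂ))
    (ρ : Matrix (Fin d) (Fin d) ℂ) : ℝ≥0∞ :=
  ⨅ s ∈ {s : ℝ | 0 ≤ s ∧ ∃ τ, IsDensityMatrix τ ∧
      ((1 : ℂ) + (s : ℂ))⁻¹ • (ρ + (s : ℂ) • τ) ∈ F}, ENNReal.ofReal s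

/-- The `m`-fold Kronecker (tensor) power `η^{⊗m}` of a `d × d` matrix, realized as a
`d^m × d^m` matrix indexed by tuples `Fin m → Fin d`. -/
noncomputable def tensorPow {d : ℕ} (η : Matrix (Fin d) (Fin d) ℂ) (m : ℕ) :
    Matrix (Fin m → Fin d) (Fin m → Fin d) ℂ :=
  Matrix.of fun v w => ∏ i, η (v i) (w i)

namespace MulticopyAux

variable {d : ℕ}
open Matrix

/-- Elementary matrix with a `1` in position `(i,j)`. -/
def E (i j : Fin d) : Matrix (Fin d) (Fin d) ℂ :=
  Matrix.of fun a b => if a = i ∧ b = j then 1 else 0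

/-- Tensor product of a family of matrices. -/
noncomputable def Tf (m : ℕ) (B : Fin m → Matrix (Fin d) (Fin d) ℂ) :
    Matrix (Fin m → Fin d) (Fin m → Fin d) ℂ :=
  Matrix.of fun v w => ∏ i, B i (v i) (w i)

/-- The family `(B, C, 1, 1, …, 1)`. -/
def fam (m : ℕ) (B C : Matrix (Fin d) (Fin d) ℂ) : Fin m → Matrix (Fin d) (Fin d) ℂ :=
  fun k => if (k : ℕ) = 0 then B else if (k : ℕ) = 1 then C else 1

lemma sum_prod_eq {m : ℕ} (g : Fin m → Fin d → ℂ) :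
    ∑ v : Fin m → Fin d, ∏ i, g i (v i) = ∏ i, ∑ a, g i a := by
  rw [Finset.prod_univ_sum, Fintype.piFinset_univ]

lemma trace_mul_expand {n : Type*} [Fintype n] (A B : Matrix n n ℂ) :
    (A * B).trace = ∑ v, ∑ w, A v w * B w v := by
  simp [Matrix.trace, Matrix.mul_apply, Matrix.diag]

lemma Tf_trace {m : ℕ} (B : Fin m → Matrix (Fin d) (Fin d) ℂ) (σ : Matrix (Fin d) (Fin d) ℂ) :
    (Tf m B * tensorPow σ m).trace = ∏ i, (B i * σ).trace := by
  rw [trace_mul_expand]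
  have h1 : ∀ v : Fin m → Fin d,
      ∑ w : Fin m → Fin d, Tf m B v w * tensorPow σ m w v
        = ∏ i, ∑ b, B i (v i) b * σ b (v i) := by
    intro v
    rw [← sum_prod_eq fun i b => B i (v i) b * σ b (v i)]
    refine Finset.sum_congr rfl fun w _ => ?_
    simp [Tf, tensorPow, Finset.prod_mul_distrib]
  rw [Finset.sum_congr rfl fun v _ => h1 v,
    sum_prod_eq fun i a => ∑ b, B i a b * σ b a]
  exact Finset.prod_congr rfl fun i _ => (trace_mul_expand (B i) σ).symm

lemma fam_trace_prod {m : ℕ} (hm : 2 ≤ m) (σ : Matrix (Fin d) (Fin d) ℂ)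
    (hσ : σ.trace = 1) (B C : Matrix (Fin d) (Fin d) ℂ) :
    ∏ i, (fam m B C i * σ).trace = (B * σ).trace * (C * σ).trace := by
  have h01 : (⟨0, by omega⟩ : Fin m) ≠ (⟨1, by omega⟩ : Fin m) := by
    simp [Fin.ext_iff]
  rw [← Finset.mul_prod_erase _ _ (Finset.mem_univ (⟨0, by omega⟩ : Fin m)),
    ← Finset.mul_prod_erase _ _
      (Finset.mem_erase.2 ⟨h01.symm, Finset.mem_univ (⟨1, by omega⟩ : Fin m)⟩)]
  have hrest : ∏ i ∈ (Finset.univ.erase (⟨0, by omega⟩ : Fin m)).erase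
      (⟨1, by omega⟩ : Fin m), (fam m B C i * σ).trace = 1 := by
    refine Finset.prod_eq_one fun i hi => ?_
    rw [Finset.mem_erase, Finset.mem_erase] at hi
    have h0 : (i : ℕ) ≠ 0 := by
      intro h; exact hi.2.1 (Fin.ext h)
    have h1 : (i : ℕ) ≠ 1 := by
      intro h; exact hi.1 (Fin.ext h)
    simp [fam, h0, h1, hσ]
  rw [hrest]
  simp [fam]

lemma Tf_conj {m : ℕ} (B : Fin m → Matrix (Fin d) (Fin d) ℂ) :
    (Tf m B)ᴴ = Tf m fun i => (B i)ᴴ := by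
  ext v w
  simp [Tf, Matrix.conjTranspose_apply, star_prod]

lemma fam_conj {m : ℕ} (B C : Matrix (Fin d) (Fin d) ℂ) :
    (fun k => (fam m B C k)ᴴ) = fam m Bᴴ Cᴴ := by
  funext k
  simp only [fam]
  split_ifs <;> simp

lemma E_conj (i j : Fin d) : (E i j)ᴴ = E j i := by
  ext a b
  simp only [E, Matrix.conjTranspose_apply, Matrix.of_apply]
  rw [apply_ite star, star_one, star_zero, if_congr and_comm rfl rfl]

lemma E_trace (i j : Fin d) (σ : Matrix (Fin d) (Fin d) ℂ) :
    (E i j * σ).trace = σ j i := by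
  rw [trace_mul_expand]
  simp [E, Finset.sum_ite_eq, ite_and]

section
attribute [local instance] Matrix.normedAddCommGroup

lemma sep_aux (F : Set (Matrix (Fin d) (Fin d) ℂ)) (h : IsClosed F)
    (ρ : Matrix (Fin d) (Fin d) ℂ) (hρ : ρ ∉ F) :
    ∃ ε > 0, ∀ σ ∈ F, ∃ i j, ε ≤ dist (σ i j) (ρ i j) := by
  have ho : IsOpen Fᶜ := h.isOpen_compl
  replace ho := Metric.isOpen_iff.1 ho
  obtain ⟨ε, hε, hb⟩ := ho ρ hρ
  refine ⟨ε / 2, by linarith, fun σ hσ => ?_⟩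
  by_contra hc
  push_neg at hc
  have hd : dist σ ρ ≤ ε / 2 := by
    refine (dist_pi_le_iff (by positivity)).2 ?_
    intro i
    rw [dist_pi_le_iff (by positivity)]
    exact fun j => (hc i j).le
  exact hb (Metric.mem_ball.2 (by linarith)) hσ

end

end MulticopyAux

open MulticopyAux Matrix in
/-- For `0 < s < R_F(ρ)` there is a family of Hermitian operators `(W̃_m)_{m=2}^d`,
with `W̃_m` acting on the `m`-fold tensor power space, such that
`tr[W̃_m ρ^{⊗m}] < 0` for all `m ∈ {2, …, d}`, while every `σ ∈ F` has some
`m ∈ {2, …, d}` with `tr[W̃_m σ^{⊗m}] ≥ 0`. -/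
theorem exists_multicopy_witness {d : ℕ}
    (F : Set (Matrix (Fin d) (Fin d) ℂ)) (hFne : F.Nonempty) (hFc : IsClosed F)
    (hF : ∀ σ ∈ F, IsDensityMatrix σ)
    (ρ : Matrix (Fin d) (Fin d) ℂ) (hρ : IsDensityMatrix ρ)
    (s : ℝ) (hs : 0 < s) (hsR : ENNReal.ofReal s < Robustness F ρ) :
    ∃ W : (m : ℕ) → Matrix (Fin m → Fin d) (Fin m → Fin d) ℂ,
      (∀ m ∈ Finset.Icc 2 d, (W m).IsHermitian) ∧
      (∀ m ∈ Finset.Icc 2 d, (W m * tensorPow ρ m).trace < 0) ∧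
      (∀ σ ∈ F, ∃ m ∈ Finset.Icc 2 d, 0 ≤ (W m * tensorPow σ m).trace) := by
  classical
  have hρh : ρ.IsHermitian := hρ.1.1
  -- `ρ` is not in `F`
  have hρF : ρ ∉ F := by
    intro hmem
    have h0 : (0 : ℝ) ∈ {s : ℝ | 0 ≤ s ∧ ∃ τ, IsDensityMatrix τ ∧
        ((1 : ℂ) + (s : ℂ))⁻¹ • (ρ + (s : ℂ) • τ) ∈ F} := by
      refine ⟨le_refl 0, ρ, hρ, ?_⟩
      simpa using hmem
    have hle : Robustness F ρ ≤ ENNReal.ofReal 0 := iInf₂_le 0 h0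
    rw [ENNReal.ofReal_zero] at hle
    exact absurd (lt_of_lt_of_le hsR hle) (by simp)
  obtain ⟨σ0, hσ0⟩ := hFne
  rcases Nat.lt_or_ge d 2 with hd | hd
  · -- degenerate dimensions `d = 0, 1` are impossible
    interval_cases d
    · have := (hF σ0 hσ0).2
      simp [Matrix.trace] at this
    · have h1 : σ0 0 0 = 1 := by
        have := (hF σ0 hσ0).2
        simpa [Matrix.trace, Fin.sum_univ_one] using this
      have h2 : ρ 0 0 = 1 := by
        have := hρ.2
        simpa [Matrix.trace, Fin.sum_univ_one] using this
      have hσρ : σ0 = ρ := by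
        ext i j
        rw [Fin.eq_zero i, Fin.eq_zero j, h1, h2]
      exact absurd (hσρ ▸ hσ0) hρF
  · -- main case `2 ≤ d`
    obtain ⟨ε₁, hε₁, hεF⟩ := sep_aux F hFc ρ hρF
    have hε : (0:ℝ) < ε₁ ^ 2 := by positivity
    let W : (m : ℕ) → Matrix (Fin m → Fin d) (Fin m → Fin d) ℂ := fun m =>
      (∑ i, ∑ j, Tf m (fam m (E j i) (E i j)))
        - Tf m (fam m ρ 1) - Tf m (fam m 1 ρ)
        + (((∑ i, ∑ j, Complex.normSq (ρ i j)) - ε₁ ^ 2 : ℝ) : ℂ) • Tf m (fam m 1 1)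
    have hWdef : ∀ m, W m = (∑ i, ∑ j, Tf m (fam m (E j i) (E i j)))
        - Tf m (fam m ρ 1) - Tf m (fam m 1 ρ)
        + (((∑ i, ∑ j, Complex.normSq (ρ i j)) - ε₁ ^ 2 : ℝ) : ℂ) • Tf m (fam m 1 1) :=
      fun m => rfl
    have hval : ∀ m, 2 ≤ m → ∀ σ : Matrix (Fin d) (Fin d) ℂ, σ.IsHermitian → σ.trace = 1 →
        (W m * tensorPow σ m).trace
          = (((∑ i, ∑ j, Complex.normSq (σ i j - ρ i j)) - ε₁ ^ 2 : ℝ) : ℂ) := by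
      intro m hm σ hσh hσt
      have hconjσ : ∀ i j, (starRingEnd ℂ) (σ i j) = σ j i := by
        intro i j
        conv_rhs => rw [← hσh]
        rw [Matrix.conjTranspose_apply]
        rfl
      have hconjρ : ∀ i j, (starRingEnd ℂ) (ρ i j) = ρ j i := by
        intro i j
        conv_rhs => rw [← hρh]
        rw [Matrix.conjTranspose_apply]
        rfl
      have key : ∀ i j : Fin d, ((Complex.normSq (σ i j - ρ i j) : ℝ) : ℂ)
          = σ i j * σ j i - σ i j * ρ j i - ρ i j * σ j i + ρ i j * ρ j i := by
        intro i j
        rw [← Complex.mul_conj, map_sub, hconjσ, hconjρ]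
        ring
      have keyρ : ∀ i j : Fin d, ((Complex.normSq (ρ i j) : ℝ) : ℂ) = ρ i j * ρ j i := by
        intro i j
        rw [← Complex.mul_conj, hconjρ]
      have hsw : (∑ i, ∑ j, σ i j * ρ j i) = (ρ * σ).trace := by
        rw [trace_mul_expand ρ σ, Finset.sum_comm]
        exact Finset.sum_congr rfl fun j _ => Finset.sum_congr rfl fun i _ => mul_comm _ _
      have hsw2 : (∑ i, ∑ j, ρ i j * σ j i) = (ρ * σ).trace := (trace_mul_expand ρ σ).symm
      rw [hWdef m]
      simp only [sub_mul, add_mul, Matrix.smul_mul, Finset.sum_mul, Matrix.trace_sub,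
        Matrix.trace_add, Matrix.trace_smul, Matrix.trace_sum, Tf_trace,
        fam_trace_prod hm σ hσt, E_trace, Matrix.one_mul, hσt, mul_one, one_mul]
      push_cast
      simp only [key, keyρ]
      simp only [Finset.sum_add_distrib, Finset.sum_sub_distrib, hsw, hsw2]
      simp only [smul_eq_mul]
      ring
    refine ⟨W, fun m _ => ?_, fun m hm => ?_, fun σ hσ => ?_⟩
    · -- Hermitian
      show (W m)ᴴ = W m
      rw [hWdef m]
      simp only [Matrix.conjTranspose_add, Matrix.conjTranspose_sub,
        Matrix.conjTranspose_smul, Matrix.conjTranspose_sum, Tf_conj, fam_conj,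
        E_conj, hρh.eq, Matrix.conjTranspose_one, Complex.star_def, Complex.conj_ofReal]
      rw [Finset.sum_comm]
    · -- negativity on ρ
      have hm2 : 2 ≤ m := (Finset.mem_Icc.1 hm).1
      rw [hval m hm2 ρ hρh hρ.2]
      simp only [sub_self, Complex.normSq_zero, Finset.sum_const_zero, zero_sub]
      rw [← Complex.ofReal_zero]
      exact_mod_cast (by linarith : -ε₁ ^ 2 < (0:ℝ))
    · -- nonnegativity on F at m = 2
      refine ⟨2, Finset.mem_Icc.2 ⟨le_refl 2, hd⟩, ?_⟩
      rw [hval 2 le_rfl σ (hF σ hσ).1.1 (hF σ hσ).2]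
      obtain ⟨i0, j0, hij⟩ := hεF σ hσ
      have hterm : ε₁ ^ 2 ≤ Complex.normSq (σ i0 j0 - ρ i0 j0) := by
        rw [← Complex.sq_norm, ← Complex.dist_eq]
        exact pow_le_pow_left₀ hε₁.le hij 2
      have hQ : ε₁ ^ 2 ≤ ∑ i, ∑ j, Complex.normSq (σ i j - ρ i j) := by
        calc ε₁ ^ 2 ≤ Complex.normSq (σ i0 j0 - ρ i0 j0) := hterm
        _ ≤ ∑ j, Complex.normSq (σ i0 j - ρ i0 j) :=
            Finset.single_le_sum (f := fun j => Complex.normSq (σ i0 j - ρ i0 j))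
              (fun j _ => Complex.normSq_nonneg _) (Finset.mem_univ j0)
        _ ≤ ∑ i, ∑ j, Complex.normSq (σ i j - ρ i j) :=
            Finset.single_le_sum (f := fun i => ∑ j, Complex.normSq (σ i j - ρ i j))
              (fun i _ => Finset.sum_nonneg fun j _ => Complex.normSq_nonneg _)
              (Finset.mem_univ i0)
      rw [← Complex.ofReal_zero]
      exact_mod_cast (by linarith :
        (0:ℝ) ≤ (∑ i, ∑ j, Complex.normSq (σ i j - ρ i j)) - ε₁ ^ 2)
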